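/- Let L be a linear endomorphism of a finite-dimensional vector space X, let R ⊆ V ⊆ X be subspaces with R being the smallest L-invariant subspace containing a set S, and let Π be a projection of X onto V factorized as Π = J ∘ R₀ with R₀ : X → W, J : W → X linear satisfying R₀ ∘ J = id_W. Then for every x ∈ span(S) and every t ≥ 0, exp(tL)(x) = J(exp(t · R₀∘L∘J)(R₀(x))). -/

import Mathlib

/-- Reachable-based linear model reduction: if `R ⊆ V` where `R` is the smallest `L`-invariant
subspace containing `S`, and `Π = J ∘ R₀` is a projection onto `V` with `R₀ ∘ J = id`, then
the full and the reduced evolutions agree on `span(S)`: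
`exp(tL)(x) = J(exp(t·R₀∘L∘J)(R₀(x)))`. -/

lemma exp_apply_tsum {X : Type*} [NormedAddCommGroup X] [NormedSpace ℂ X] [FiniteDimensional ℂ X]
    (A : X →L[ℂ] X) (x : X) :
    NormedSpace.exp A x = ∑' n : ℕ, ((n.factorial : ℂ)⁻¹ • A^n) x := by
  rw [NormedSpace.exp_eq_tsum ℂ]
  exact (ContinuousLinearMap.apply ℂ X x).map_tsum
    (NormedSpace.expSeries_summable' (𝕂 := ℂ) A)

lemma clm_pow_apply {X : Type*} [NormedAddCommGroup X] [NormedSpace ℂ X] [FiniteDimensional ℂ X]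
    (L : X →ₗ[ℂ] X) (n : ℕ) : ∀ x : X,
    ((LinearMap.toContinuousLinearMap L)^n) x = (L^n) x := by
  induction n with
  | zero => intro x; rfl
  | succ n ih =>
    intro x
    simp [pow_succ, ih, Module.End.mul_apply]

theorem stmt3 {X W : Type*} [NormedAddCommGroup X] [NormedSpace ℂ X] [FiniteDimensional ℂ X]
    [NormedAddCommGroup W] [NormedSpace ℂ W] [FiniteDimensional ℂ W]
    (L : Module.End ℂ X) (S : Set X) (R V : Submodule ℂ X) (hRV : R ≤ V)
    (hR : IsLeast {U : Submodule ℂ X | (∀ x ∈ U, L x ∈ U) ∧ S ⊆ U} R)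
    (R₀ : X →ₗ[ℂ] W) (J : W →ₗ[ℂ] X)
    (hmem : ∀ x : X, J (R₀ x) ∈ V) (hfix : ∀ v ∈ V, J (R₀ v) = v)
    (hRJ : R₀ ∘ₗ J = LinearMap.id)
    (t : ℝ) (ht : 0 ≤ t) (x : X) (hx : x ∈ Submodule.span ℂ S) :
    NormedSpace.exp ((t : ℂ) • LinearMap.toContinuousLinearMap (L : X →ₗ[ℂ] X)) x =
      J (NormedSpace.exp
          ((t : ℂ) • LinearMap.toContinuousLinearMap (R₀ ∘ₗ (L : X →ₗ[ℂ] X) ∘ₗ J)) (R₀ x)) := by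
  set F : W →ₗ[ℂ] W := R₀ ∘ₗ (L : X →ₗ[ℂ] X) ∘ₗ J with hF
  have hxR : x ∈ R := Submodule.span_le.mpr hR.1.2 hx
  have key : ∀ n : ℕ, ((L : X →ₗ[ℂ] X)^n) x ∈ R ∧
      (F^n) (R₀ x) = R₀ (((L : X →ₗ[ℂ] X)^n) x) := by
    intro n
    induction n with
    | zero => simpa using hxR
    | succ n ih =>
      refine ⟨?_, ?_⟩
      · rw [pow_succ', Module.End.mul_apply]
        exact hR.1.1 _ ih.1
      · rw [pow_succ', pow_succ', Module.End.mul_apply, Module.End.mul_apply, ih.2, hF]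
        simp only [LinearMap.comp_apply, hfix _ (hRV ih.1)]
  have key2 : ∀ n : ℕ, J ((F^n) (R₀ x)) = ((L : X →ₗ[ℂ] X)^n) x := fun n => by
    rw [(key n).2]; exact hfix _ (hRV (key n).1)
  rw [exp_apply_tsum, exp_apply_tsum]
  have hsum := (LinearMap.toContinuousLinearMap J).map_tsum
    ((ContinuousLinearMap.apply ℂ W (R₀ x)).summable
      (NormedSpace.expSeries_summable' (𝕂 := ℂ) ((t : ℂ) • LinearMap.toContinuousLinearMap F)))
  simp only [ContinuousLinearMap.apply_apply] at hsum
  rw [show (J : W → X) = (LinearMap.toContinuousLinearMap J : W → X) from rfl]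
  rw [hsum]
  congr 1
  funext n
  simp only [ContinuousLinearMap.smul_apply, smul_pow, ContinuousLinearMap.smul_apply,
    map_smul, clm_pow_apply]
  rw [show (LinearMap.toContinuousLinearMap J : W → X) ((F^n) (R₀ x)) = J ((F^n) (R₀ x)) from rfl,
    key2]
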